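/- Let (A[k])_{k≥0} be a sequence of column stochastic matrices in ℝ^{n×n} whose forward products B_{k:0} = A[k] ⋯ A[0] satisfy: for every row index j and all column indices i, i′, (B_{k:0})_{ji} − (B_{k:0})_{ji′} → 0 as k → ∞, and there exists δ > 0 such that (B_{k:0})_{jj} ≥ δ for all j and k. Let y0 ∈ ℝ^n be arbitrary and x0 ∈ ℝ^n have all entries strictly positive. Then for every j, the ratio (B_{k:0} y0)_j / (B_{k:0} x0)_j converges, as k → ∞, to (Σ_{i=1}^n (y0)_i)/(Σ_{i=1}^n (x0)_i); in particular, with x0 = 𝟏 the limit is the average (Σ_i (y0)_i)/n. -/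

import Mathlib

/-- ratio-convergence step: if the forward products `B_{k:0}` of column
stochastic matrices have asymptotically coinciding columns and uniformly positive
diagonal entries, then for arbitrary `y0` and entrywise positive `x0`, the ratio
`(B_{k:0} y0)_j / (B_{k:0} x0)_j` converges to `(∑ i, y0 i) / (∑ i, x0 i)`. -/
theorem stmt14 (n : ℕ) (A : ℕ → Matrix (Fin n) (Fin n) ℝ)
    (hnn : ∀ k i j, 0 ≤ A k i j) (hcol : ∀ k j, ∑ i, A k i j = 1)
    (B : ℕ → Matrix (Fin n) (Fin n) ℝ)
    (hB0 : B 0 = A 0) (hBk : ∀ k, B (k + 1) = A (k + 1) * B k)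
    (hergo : ∀ j i i', Filter.Tendsto (fun k => B k j i - B k j i')
      Filter.atTop (nhds 0))
    (δ : ℝ) (hδ : 0 < δ) (hdiag : ∀ k j, δ ≤ B k j j)
    (y0 x0 : Fin n → ℝ) (hx0 : ∀ i, 0 < x0 i) :
    ∀ j, Filter.Tendsto
      (fun k => ((B k).mulVec y0) j / ((B k).mulVec x0) j)
      Filter.atTop (nhds ((∑ i, y0 i) / (∑ i, x0 i))) := by
  intro j
  -- nonnegativity of B k entries
  have hBnn : ∀ k i i', 0 ≤ B k i i' := by
    intro k
    induction k with
    | zero => intro i i'; rw [hB0]; exact hnn 0 i i'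
    | succ k ih =>
      intro i i'
      rw [hBk, Matrix.mul_apply]
      exact Finset.sum_nonneg fun l _ => mul_nonneg (hnn _ _ _) (ih _ _)
  set Sy := ∑ i, y0 i with hSy
  set Sx := ∑ i, x0 i with hSxdef
  have hSx : 0 < Sx := by
    refine Finset.sum_pos (fun i _ => hx0 i) ⟨j, Finset.mem_univ j⟩
  set L := Sy / Sx with hL
  have hLSx : L * Sx = Sy := div_mul_cancel₀ _ hSx.ne'
  have mulVec_eq : ∀ (v : Fin n → ℝ) (k : ℕ),
      (B k).mulVec v j = ∑ i, B k j i * v i := by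
    intro v k
    simp [Matrix.mulVec, dotProduct]
  -- key limit
  have key : ∀ (v : Fin n → ℝ), Filter.Tendsto
      (fun k => (B k).mulVec v j - B k j j * ∑ i, v i) Filter.atTop (nhds 0) := by
    intro v
    have heq : ∀ k, (B k).mulVec v j - B k j j * ∑ i, v i
        = ∑ i, (B k j i - B k j j) * v i := by
      intro k
      rw [mulVec_eq, Finset.mul_sum, ← Finset.sum_sub_distrib]
      congr 1; funext i; ring
    simp only [heq]
    have : Filter.Tendsto (fun k => ∑ i, (B k j i - B k j j) * v i)
        Filter.atTop (nhds (∑ i : Fin n, (0:ℝ) * v i)) := by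
      exact tendsto_finset_sum _ fun i _ => (hergo j i j).mul_const (v i)
    simpa using this
  have h1 := key y0
  have h2 := (key x0).const_mul L
  have hnum : Filter.Tendsto
      (fun k => (B k).mulVec y0 j - L * (B k).mulVec x0 j) Filter.atTop (nhds 0) := by
    have h3 := h1.sub h2
    have heq : ∀ k, ((B k).mulVec y0 j - B k j j * Sy)
        - L * ((B k).mulVec x0 j - B k j j * Sx)
        = (B k).mulVec y0 j - L * (B k).mulVec x0 j := by
      intro k
      have : B k j j * Sy = L * (B k j j * Sx) := by rw [← hLSx]; ring
      nlinarith [this]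
    simp only [← hSy, ← hSxdef, heq] at h3
    simpa using h3
  -- lower bound on denominator
  have hg : ∀ k, δ * x0 j ≤ (B k).mulVec x0 j := by
    intro k
    rw [mulVec_eq]
    calc δ * x0 j ≤ B k j j * x0 j :=
          mul_le_mul_of_nonneg_right (hdiag k j) (hx0 j).le
      _ ≤ ∑ i, B k j i * x0 i :=
          Finset.single_le_sum (fun i _ => mul_nonneg (hBnn k j i) (hx0 i).le)
            (Finset.mem_univ j)
  have hδx : 0 < δ * x0 j := mul_pos hδ (hx0 j)
  have hgpos : ∀ k, 0 < (B k).mulVec x0 j := fun k => lt_of_lt_of_le hδx (hg k)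
  -- squeeze
  have hsq : Filter.Tendsto
      (fun k => (B k).mulVec y0 j / (B k).mulVec x0 j - L) Filter.atTop (nhds 0) := by
    have hbound : Filter.Tendsto
        (fun k => |(B k).mulVec y0 j - L * (B k).mulVec x0 j| / (δ * x0 j))
        Filter.atTop (nhds 0) := by
      have := (hnum.abs).div_const (δ * x0 j)
      simpa using this
    refine squeeze_zero_norm (fun k => ?_) hbound
    have hgk := hgpos k
    have : (B k).mulVec y0 j / (B k).mulVec x0 j - L
        = ((B k).mulVec y0 j - L * (B k).mulVec x0 j) / (B k).mulVec x0 j := by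
      field_simp
    rw [this, Real.norm_eq_abs, abs_div, abs_of_pos hgk]
    exact div_le_div_of_nonneg_left (abs_nonneg _) hδx (hg k) |>.trans_eq rfl
      |> fun h => h
  have := hsq.add_const L
  simpa using this
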